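/- Let α, β be real numbers with α > β > −1/2 and ρ = α + β + 1, and let c be the Jacobi c-function. There exists a constant C > 0, depending only on α and β, such that for every t > 0: ∫₀^∞ e^{−2t(λ²+ρ²)} |c(λ)|^{−2} dλ ≤ C e^{−2tρ²} (1 + t^{−(α+1)}); in particular, for each t > 0 the function λ ↦ e^{−t(λ²+ρ²)} belongs to L² of the measure |c(λ)|^{−2} dλ on (0, ∞). -/

import Mathlib

open Complex MeasureTheory

/-- The Jacobi `c`-function
`c(λ) = 2^{ρ−iλ} Γ(iλ) Γ(α+1) / (Γ((ρ+iλ)/2) Γ((ρ+iλ)/2 − β))` with `ρ = α+β+1`. -/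
noncomputable def jacobiC (α β : ℝ) (z : ℂ) : ℂ :=
  (2 : ℂ) ^ ((α : ℂ) + β + 1 - Complex.I * z) * Complex.Gamma (Complex.I * z) *
    Complex.Gamma ((α : ℂ) + 1) /
    (Complex.Gamma (((α : ℂ) + β + 1 + Complex.I * z) / 2) *
     Complex.Gamma (((α : ℂ) + β + 1 + Complex.I * z) / 2 - β))

/-- The Plancherel density measure `|c(λ)|⁻² dλ` on `(0,∞)`. -/
noncomputable def plancherelMeasure (α β : ℝ) : Measure ℝ :=
  (volume.restrict (Set.Ioi (0 : ℝ))).withDensity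
    (fun l => ENNReal.ofReal ((‖jacobiC α β (l : ℂ)‖ ^ 2)⁻¹))

open Real Set Finset Filter Topology NNReal ENNReal


lemma abs_Gamma_le {x : ℝ} (hx : 0 < x) (y : ℝ) :
    ‖Complex.Gamma ((x:ℂ) + y * I)‖ ≤ Real.Gamma x := by
  have hre : ((x:ℂ) + y*I).re = x := by simp
  rw [Complex.Gamma_eq_integral (by rw [hre]; exact hx), Real.Gamma_eq_integral hx,
    Complex.GammaIntegral]
  calc ‖∫ t in Ioi (0:ℝ), ((Real.exp (-t) : ℝ):ℂ) * (t:ℂ) ^ (((x:ℂ)+y*I) - 1)‖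
      = ‖∫ t in Ioi (0:ℝ), ((Real.exp (-t) : ℝ):ℂ) * (t:ℂ) ^ (((x:ℂ)+y*I) - 1)‖ :=
        rfl
    _ ≤ ∫ t in Ioi (0:ℝ), ‖((Real.exp (-t) : ℝ):ℂ) * (t:ℂ) ^ (((x:ℂ)+y*I) - 1)‖ :=
        norm_integral_le_integral_norm _
    _ = ∫ t in Ioi (0:ℝ), Real.exp (-t) * t ^ (x - 1) := by
        refine setIntegral_congr_fun measurableSet_Ioi (fun t ht => ?_)
        rw [norm_mul, Complex.norm_real,
          Complex.norm_cpow_eq_rpow_re_of_pos ht]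
        simp [abs_of_pos (Real.exp_pos _)]

lemma sq_abs_Gamma_one_add {μ : ℝ} (hμ : 0 < μ) :
    (‖Complex.Gamma (1 + μ*I)‖)^2 = π * μ / Real.sinh (π * μ) := by
  have hs : Real.sinh (π * μ) ≠ 0 :=
    ne_of_gt (by positivity)
  have hz : (μ:ℂ)*I ≠ 0 := by
    simp [Complex.ext_iff, hμ.ne']
  have h1 : Complex.Gamma (1 + (μ:ℂ)*I) = (μ:ℂ)*I * Complex.Gamma ((μ:ℂ)*I) := by
    rw [add_comm]; exact Complex.Gamma_add_one _ hz
  have hconj : Complex.Gamma (1 - (μ:ℂ)*I) = (starRingEnd ℂ) (Complex.Gamma (1 + μ*I)) := by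
    rw [← Complex.Gamma_conj]; congr 1
    simp [Complex.ext_iff]
  have hsin : Complex.sin ((π:ℂ) * ((μ:ℂ)*I)) = (Real.sinh (π*μ) : ℂ) * I := by
    rw [show (π:ℂ) * ((μ:ℂ)*I) = (((π*μ:ℝ)):ℂ) * I by push_cast; ring, Complex.sin_mul_I,
      Complex.ofReal_sinh]
  have hrefl := Complex.Gamma_mul_Gamma_one_sub ((μ:ℂ)*I)
  have key : ((Complex.normSq (Complex.Gamma (1 + (μ:ℂ)*I)) : ℝ) : ℂ)
      = ((π * μ / Real.sinh (π * μ) : ℝ) : ℂ) := by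
    have e1 : (μ:ℂ)*I*((π:ℂ)/(((Real.sinh (π*μ):ℝ):ℂ)*I))
        = (π:ℂ)*(μ:ℂ)/((Real.sinh (π*μ):ℝ):ℂ) := by
      calc (μ:ℂ)*I*((π:ℂ)/(((Real.sinh (π*μ):ℝ):ℂ)*I))
          = ((π:ℂ)*(μ:ℂ))*I/(((Real.sinh (π*μ):ℝ):ℂ)*I) := by ring
        _ = _ := mul_div_mul_right _ _ Complex.I_ne_zero
    rw [← Complex.mul_conj, ← hconj, h1, mul_assoc, hrefl, hsin, Complex.ofReal_div,
      Complex.ofReal_mul, e1]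
  have := Complex.ofReal_inj.mp key
  rw [Complex.sq_norm, this]

lemma sq_abs_Gamma_rec (x : ℝ) {μ : ℝ} (hμ : μ ≠ 0) :
    (‖Complex.Gamma (((x+1:ℝ):ℂ) + μ*I)‖)^2
      = (x^2+μ^2) * (‖Complex.Gamma ((x:ℂ) + μ*I)‖)^2 := by
  have hz : (x:ℂ) + μ*I ≠ 0 := by
    intro h
    have := congrArg Complex.im h
    simp at this
    exact hμ this
  have he : ((x+1:ℝ):ℂ) + μ*I = ((x:ℂ)+μ*I) + 1 := by push_cast; ring
  rw [he, Complex.Gamma_add_one _ hz, norm_mul, mul_pow, Complex.sq_norm]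
  congr 1
  simp [Complex.normSq_apply]
  ring

lemma base_Gamma_bound {μ : ℝ} (hμ : (1/2:ℝ) ≤ μ) :
    (‖Complex.Gamma (1 + μ*I)‖)^2 ≤ 7 * μ * Real.exp (-π*μ) := by
  have hμ0 : 0 < μ := lt_of_lt_of_le (by norm_num) hμ
  rw [sq_abs_Gamma_one_add hμ0]
  have hπ : (3:ℝ) < π := Real.pi_gt_three
  have hπ2 : π < 3.15 := Real.pi_lt_d2
  -- sinh (πμ) ≥ (15/16) * exp(πμ) / 2
  have he3 : Real.exp (-(2*π*μ)) ≤ 1/16 := by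
    have h1 : (3:ℝ) ≤ 2*π*μ := by nlinarith
    have := Real.exp_le_exp.mpr (neg_le_neg h1)
    refine this.trans ?_
    rw [show (-(3:ℝ)) = -3 by norm_num]
    have h16 : (16:ℝ) ≤ Real.exp 3 := by
      have h0 : (2.7182818283:ℝ) < Real.exp 1 := Real.exp_one_gt_d9
      have e1 : Real.exp 3 = Real.exp 1 * Real.exp 1 * Real.exp 1 := by
        rw [← Real.exp_add, ← Real.exp_add]; norm_num
      nlinarith [Real.exp_pos 1]
    rw [Real.exp_neg]
    rw [inv_le_comm₀ (Real.exp_pos 3) (by norm_num)] at *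
    · linarith
  have hsinh : (15/32) * Real.exp (π*μ) ≤ Real.sinh (π*μ) := by
    rw [Real.sinh_eq]
    have : Real.exp (-(π*μ)) = Real.exp (-(2*π*μ)) * Real.exp (π*μ) := by
      rw [← Real.exp_add]; ring_nf
    rw [this]
    have hp := Real.exp_pos (π*μ)
    nlinarith
  have hsinh0 : 0 < Real.sinh (π*μ) := by positivity
  rw [div_le_iff₀ hsinh0]
  have h1 : π * μ = (π * μ * Real.exp (π*μ)) * Real.exp (-π*μ) := by
    rw [mul_assoc, ← Real.exp_add]; simp
  have hexp0 := Real.exp_pos (π*μ)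
  have hexpn0 := Real.exp_pos (-π*μ)
  calc π * μ = (π * μ * Real.exp (π*μ)) * Real.exp (-π*μ) := h1
    _ ≤ (7 * μ * ((15/32) * Real.exp (π*μ))) * Real.exp (-π*μ) := by
        have h2 : (0:ℝ) ≤ (105/32 - π) * μ * Real.exp (π*μ) := by
          have : (0:ℝ) ≤ 105/32 - π := by linarith
          positivity
        nlinarith
    _ ≤ 7 * μ * Real.exp (-π*μ) * Real.sinh (π*μ) := by
        have h3 : (0:ℝ) ≤ 7 * μ * Real.exp (-π*μ) * (Real.sinh (π*μ) - 15/32 * Real.exp (π*μ)) := by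
          have : (0:ℝ) ≤ Real.sinh (π*μ) - 15/32 * Real.exp (π*μ) := by linarith
          positivity
        nlinarith


lemma sum_inv_sq_le (n : ℕ) : ∑ k ∈ Finset.range n, (1:ℝ)/((k:ℝ)+1)^2 ≤ 2 := by
  have key : ∀ m : ℕ, 1 ≤ m → ∑ k ∈ Finset.range m, (1:ℝ)/((k:ℝ)+1)^2 ≤ 2 - 1/(m:ℝ) := by
    intro m hm
    induction m with
    | zero => omega
    | succ p ih =>
      rcases Nat.eq_or_lt_of_le hm with h1 | h2
      · simp [← h1]; norm_num
      · have hp : 1 ≤ p := by omega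
        have hp0 : (0:ℝ) < p := by positivity
        rw [Finset.sum_range_succ]
        have step : (1:ℝ)/((p:ℝ)+1)^2 ≤ 1/(p:ℝ) - 1/((p:ℝ)+1) := by
          rw [div_sub_div _ _ (ne_of_gt hp0) (by positivity)]
          rw [div_le_div_iff₀ (by positivity) (by positivity)]
          ring_nf
          nlinarith
        have := ih hp
        push_cast
        linarith
  rcases Nat.eq_zero_or_pos n with h | h
  · simp [h]
  · have h1 : (0:ℝ) < 1/(n:ℝ) := by
      have : (0:ℝ) < n := by positivity
      positivity
    linarith [key n h]

lemma perk_log_ineq {δ μ k : ℝ} (hδ0 : 0 ≤ δ) (hδ1 : δ ≤ 1) (hk : 1 ≤ k) :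
    Real.log (k^2+μ^2) - Real.log ((k+δ)^2+μ^2)
      ≤ δ*(Real.log (k^2+μ^2) - Real.log ((k+1)^2+μ^2)) + 1/(4*k^2) := by
  have hk0 : (0:ℝ) < k := by linarith
  have hX : (0:ℝ) < k^2+μ^2 := by positivity
  have hY : (0:ℝ) < (k+1)^2+μ^2 := by positivity
  have hT : (0:ℝ) < (k+δ)^2+μ^2 := by nlinarith
  have hgm : (k^2+μ^2)^(1-δ) * ((k+1)^2+μ^2)^δ ≤ ((k+δ)^2+μ^2) + δ*(1-δ) := by
    have h := Real.geom_mean_le_arith_mean2_weighted (by linarith : (0:ℝ) ≤ 1-δ) hδ0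
      hX.le hY.le (by ring)
    calc (k^2+μ^2)^(1-δ) * ((k+1)^2+μ^2)^δ ≤ (1-δ)*(k^2+μ^2) + δ*((k+1)^2+μ^2) := h
      _ = ((k+δ)^2+μ^2) + δ*(1-δ) := by ring
  have hlog1 : (1-δ)*Real.log (k^2+μ^2) + δ*Real.log ((k+1)^2+μ^2)
      ≤ Real.log (((k+δ)^2+μ^2) + δ*(1-δ)) := by
    have hgm0 : (0:ℝ) < (k^2+μ^2)^(1-δ) * ((k+1)^2+μ^2)^δ := by
      have := Real.rpow_pos_of_pos hX (1-δ)
      have := Real.rpow_pos_of_pos hY δ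
      positivity
    have := Real.log_le_log hgm0 hgm
    rwa [Real.log_mul (ne_of_gt (Real.rpow_pos_of_pos hX (1-δ)))
      (ne_of_gt (Real.rpow_pos_of_pos hY δ)), Real.log_rpow hX, Real.log_rpow hY] at this
  have hlog2 : Real.log (((k+δ)^2+μ^2) + δ*(1-δ))
      ≤ Real.log ((k+δ)^2+μ^2) + 1/(4*k^2) := by
    have hc : (0:ℝ) ≤ δ*(1-δ) := by nlinarith
    have hTc : (0:ℝ) < ((k+δ)^2+μ^2) + δ*(1-δ) := by linarith
    have h1 : Real.log (((k+δ)^2+μ^2) + δ*(1-δ)) - Real.log ((k+δ)^2+μ^2)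
        = Real.log ((((k+δ)^2+μ^2) + δ*(1-δ))/((k+δ)^2+μ^2)) := by
      rw [Real.log_div (ne_of_gt hTc) (ne_of_gt hT)]
    have h2 : Real.log ((((k+δ)^2+μ^2) + δ*(1-δ))/((k+δ)^2+μ^2))
        ≤ (((k+δ)^2+μ^2) + δ*(1-δ))/((k+δ)^2+μ^2) - 1 :=
      Real.log_le_sub_one_of_pos (by positivity)
    have h3 : (((k+δ)^2+μ^2) + δ*(1-δ))/((k+δ)^2+μ^2) - 1 = δ*(1-δ)/((k+δ)^2+μ^2) := by
      field_simp
      ring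
    have h4 : δ*(1-δ)/((k+δ)^2+μ^2) ≤ 1/(4*k^2) := by
      have e1 : δ*(1-δ) ≤ 1/4 := by nlinarith [sq_nonneg (δ - 1/2)]
      have e2 : k^2 ≤ (k+δ)^2+μ^2 := by nlinarith
      rw [div_le_div_iff₀ hT (by positivity)]
      nlinarith [mul_le_mul_of_nonneg_right e1 (by positivity : (0:ℝ) ≤ 4*k^2)]
    linarith
  linarith

lemma ratio_bound {δ μ : ℝ} (hδ0 : 0 ≤ δ) (hδ1 : δ ≤ 1) (hμ : 1/2 ≤ μ) {n : ℕ} (hn : 1 ≤ n) :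
    (n:ℝ)^(2*δ) * ∏ j ∈ Finset.range (n+1), (((1+(j:ℝ))^2+μ^2)/((1+δ+(j:ℝ))^2+μ^2))
      ≤ 9 * μ^(2*δ) := by
  have hμ0 : (0:ℝ) < μ := by linarith
  have hn0 : (0:ℝ) < n := by positivity
  set F : ℝ → ℝ := fun u => Real.log (u^2+μ^2) with hF
  have hnum : ∀ j : ℕ, (0:ℝ) < (1+(j:ℝ))^2+μ^2 := fun j => by positivity
  have hden : ∀ j : ℕ, (0:ℝ) < (1+δ+(j:ℝ))^2+μ^2 := fun j => by
    have : (0:ℝ) ≤ (j:ℝ) := by positivity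
    nlinarith
  have hfac : ∀ j : ℕ, (0:ℝ) < ((1+(j:ℝ))^2+μ^2)/((1+δ+(j:ℝ))^2+μ^2) := fun j =>
    div_pos (hnum j) (hden j)
  have hP : (0:ℝ) < ∏ j ∈ Finset.range (n+1), (((1+(j:ℝ))^2+μ^2)/((1+δ+(j:ℝ))^2+μ^2)) :=
    Finset.prod_pos (fun j _ => hfac j)
  have hrp : (0:ℝ) < (n:ℝ)^(2*δ) := Real.rpow_pos_of_pos hn0 _
  have hLHS : (0:ℝ) < (n:ℝ)^(2*δ) * ∏ j ∈ Finset.range (n+1),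
      (((1+(j:ℝ))^2+μ^2)/((1+δ+(j:ℝ))^2+μ^2)) := mul_pos hrp hP
  -- log of LHS
  have hlog : Real.log ((n:ℝ)^(2*δ) * ∏ j ∈ Finset.range (n+1),
      (((1+(j:ℝ))^2+μ^2)/((1+δ+(j:ℝ))^2+μ^2)))
      = 2*δ*Real.log n + ∑ j ∈ Finset.range (n+1), (F (1+(j:ℝ)) - F (1+δ+(j:ℝ))) := by
    rw [Real.log_mul (ne_of_gt hrp) (ne_of_gt hP), Real.log_rpow hn0,
      Real.log_prod (fun j _ => ne_of_gt (hfac j))]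
    congr 1
    refine Finset.sum_congr rfl (fun j _ => ?_)
    rw [Real.log_div (ne_of_gt (hnum j)) (ne_of_gt (hden j))]
  -- bound the sum
  have hsum : ∑ j ∈ Finset.range (n+1), (F (1+(j:ℝ)) - F (1+δ+(j:ℝ)))
      ≤ δ*(F 1 - F ((n:ℝ)+2)) + 1/2 := by
    have hterm : ∀ j ∈ Finset.range (n+1), F (1+(j:ℝ)) - F (1+δ+(j:ℝ))
        ≤ δ*(F (1+(j:ℝ)) - F (1+(j:ℝ)+1)) + 1/(4*(1+(j:ℝ))^2) := by
      intro j _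
      have hk : (1:ℝ) ≤ 1+(j:ℝ) := by
        have : (0:ℝ) ≤ (j:ℝ) := by positivity
        linarith
      have := perk_log_ineq hδ0 hδ1 hk (μ := μ)
      simp only [hF]
      convert this using 4 <;> ring
    have h1 := Finset.sum_le_sum hterm
    rw [Finset.sum_add_distrib] at h1
    have htel : ∑ j ∈ Finset.range (n+1), δ*(F (1+(j:ℝ)) - F (1+(j:ℝ)+1))
        = δ*(F 1 - F ((n:ℝ)+2)) := by
      rw [← Finset.mul_sum]
      congr 1
      have htl := Finset.sum_range_sub' (fun j => F (1+(j:ℝ))) (n+1)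
      simp only [Nat.cast_zero, add_zero] at htl
      calc ∑ j ∈ Finset.range (n+1), (F (1+(j:ℝ)) - F (1+(j:ℝ)+1))
          = ∑ j ∈ Finset.range (n+1), (F (1+(j:ℝ)) - F (1+((j+1:ℕ):ℝ))) := by
            refine Finset.sum_congr rfl (fun j _ => ?_)
            congr 2
            push_cast; ring
        _ = F 1 - F (1 + ((n+1:ℕ):ℝ)) := htl
        _ = F 1 - F ((n:ℝ)+2) := by congr 2; push_cast; ring
    have hhalf : ∑ j ∈ Finset.range (n+1), 1/(4*(1+(j:ℝ))^2) ≤ 1/2 := by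
      have : ∀ j ∈ Finset.range (n+1), 1/(4*(1+(j:ℝ))^2) = (1/4) * (1/((j:ℝ)+1)^2) := by
        intro j _; rw [one_div, mul_inv, ← one_div]; ring_nf
      rw [Finset.sum_congr rfl this, ← Finset.mul_sum]
      have := sum_inv_sq_le (n+1)
      linarith
    calc ∑ j ∈ Finset.range (n+1), (F (1+(j:ℝ)) - F (1+δ+(j:ℝ)))
        ≤ ∑ j ∈ Finset.range (n+1), δ*(F (1+(j:ℝ)) - F (1+(j:ℝ)+1))
          + ∑ j ∈ Finset.range (n+1), 1/(4*(1+(j:ℝ))^2) := h1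
      _ ≤ δ*(F 1 - F ((n:ℝ)+2)) + 1/2 := by rw [htel]; linarith
  -- F(n+2) ≥ 2 log n
  have hF2 : 2*Real.log n ≤ F ((n:ℝ)+2) := by
    have h1 : ((n:ℝ))^2 ≤ ((n:ℝ)+2)^2+μ^2 := by nlinarith
    have h2 := Real.log_le_log (by positivity : (0:ℝ) < (n:ℝ)^2) h1
    rw [Real.log_pow] at h2
    have : ((2:ℕ):ℝ) = 2 := by norm_num
    rw [this] at h2
    exact h2
  have hF1 : F 1 ≤ Real.log 5 + 2*Real.log μ := by
    have h1 : (1:ℝ)^2+μ^2 ≤ 5*μ^2 := by nlinarith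
    have h2 := Real.log_le_log (by positivity : (0:ℝ) < (1:ℝ)^2+μ^2) h1
    rw [Real.log_mul (by norm_num) (by positivity), Real.log_pow] at h2
    have : ((2:ℕ):ℝ) = 2 := by norm_num
    rw [this] at h2
    exact h2
  have hF1' : (0:ℝ) ≤ F 1 := by
    simp only [hF]
    apply Real.log_nonneg; nlinarith
  have hR : Real.log ((n:ℝ)^(2*δ) * ∏ j ∈ Finset.range (n+1),
      (((1+(j:ℝ))^2+μ^2)/((1+δ+(j:ℝ))^2+μ^2)))
      ≤ Real.log 5 + 1/2 + 2*δ*Real.log μ := by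
    rw [hlog]
    have c1 := mul_le_mul_of_nonneg_left hF2 hδ0
    have c2 := mul_le_mul_of_nonneg_left hF1 hδ0
    have h4 : δ*Real.log 5 ≤ Real.log 5 := by
      have h5 : (0:ℝ) ≤ Real.log 5 := Real.log_nonneg (by norm_num)
      nlinarith
    nlinarith [hsum]
  have hexp := Real.exp_le_exp.mpr hR
  rw [Real.exp_log hLHS] at hexp
  refine hexp.trans ?_
  rw [Real.exp_add, Real.exp_add, Real.exp_log (by norm_num : (0:ℝ) < 5)]
  have hμpow : Real.exp (2*δ*Real.log μ) = μ^(2*δ) := by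
    rw [Real.rpow_def_of_pos hμ0]
    exact congrArg Real.exp (by ring)
  rw [hμpow]
  have hhalf : Real.exp (1/2) ≤ 9/5 := by
    have h := Real.exp_one_lt_d9
    have h2 : Real.exp (1/2) * Real.exp (1/2) = Real.exp 1 := by
      rw [← Real.exp_add]; norm_num
    nlinarith [Real.exp_pos (1/2)]
  have hp := Real.rpow_pos_of_pos hμ0 (2*δ)
  nlinarith

lemma sq_abs_GammaSeq (x μ : ℝ) {n : ℕ} (hn : 1 ≤ n) :
    (‖Complex.GammaSeq ((x:ℂ) + μ*I) n‖)^2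
      = (n:ℝ)^(2*x) * ((n.factorial:ℝ))^2
        / ∏ j ∈ Finset.range (n+1), ((x+(j:ℝ))^2+μ^2) := by
  have hn0 : (0:ℝ) < n := by positivity
  rw [Complex.GammaSeq, norm_div, norm_mul]
  rw [div_pow, mul_pow]
  congr 1
  · congr 1
    · have h1 : ((n:ℂ)) = (((n:ℝ)):ℂ) := by push_cast; ring
      rw [h1, Complex.norm_cpow_eq_rpow_re_of_pos hn0]
      have h2 : (((x:ℂ) + μ*I).re) = x := by simp
      rw [h2, ← Real.rpow_natCast ((n:ℝ)^x) 2, ← Real.rpow_mul hn0.le]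
      congr 1
      norm_num
      ring
    · rw [show ((n.factorial : ℂ)) = (((n.factorial:ℝ)):ℂ) by push_cast; ring,
        Complex.norm_real, Real.norm_eq_abs, abs_of_pos (by positivity)]
  · rw [Complex.norm_prod, ← Finset.prod_pow]
    refine Finset.prod_congr rfl (fun j _ => ?_)
    rw [Complex.sq_norm]
    simp [Complex.normSq_apply]
    ring

lemma interp_bound {δ μ : ℝ} (hδ0 : 0 ≤ δ) (hδ1 : δ ≤ 1) (hμ : 1/2 ≤ μ) :
    (‖Complex.Gamma (((1+δ:ℝ):ℂ) + μ*I)‖)^2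
      ≤ 9 * μ^(2*δ) * (‖Complex.Gamma (((1:ℝ):ℂ) + μ*I)‖)^2 := by
  have hμ0 : (0:ℝ) < μ := by linarith
  set z₁ : ℂ := ((1+δ:ℝ):ℂ) + μ*I with hz₁
  set z₂ : ℂ := ((1:ℝ):ℂ) + μ*I with hz₂
  have hlim1 : Tendsto (fun n => (‖Complex.GammaSeq z₁ n‖)^2) atTop
      (𝓝 ((‖Complex.Gamma z₁‖)^2)) :=
    ((continuous_norm.tendsto _).comp (Complex.GammaSeq_tendsto_Gamma z₁)).pow 2
  have hlim2 : Tendsto (fun n => 9 * μ^(2*δ) * (‖Complex.GammaSeq z₂ n‖)^2) atTop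
      (𝓝 (9 * μ^(2*δ) * (‖Complex.Gamma z₂‖)^2)) :=
    (((continuous_norm.tendsto _).comp (Complex.GammaSeq_tendsto_Gamma z₂)).pow 2).const_mul _
  refine le_of_tendsto_of_tendsto hlim1 hlim2 ?_
  rw [Filter.EventuallyLE, eventually_atTop]
  refine ⟨1, fun n hn => ?_⟩
  have hn0 : (0:ℝ) < n := by positivity
  rw [sq_abs_GammaSeq (1+δ) μ hn, sq_abs_GammaSeq 1 μ hn]
  have hD1 : (0:ℝ) < ∏ j ∈ Finset.range (n+1), ((1+δ+(j:ℝ))^2+μ^2) := by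
    refine Finset.prod_pos (fun j _ => ?_)
    have : (0:ℝ) ≤ (j:ℝ) := by positivity
    nlinarith
  have hD2 : (0:ℝ) < ∏ j ∈ Finset.range (n+1), ((1+(j:ℝ))^2+μ^2) := by
    refine Finset.prod_pos (fun j _ => by positivity)
  have key := ratio_bound hδ0 hδ1 hμ hn
  rw [Finset.prod_div_distrib, ← mul_div_assoc, div_le_iff₀ hD1] at key
  -- key : n^(2δ) * D2 ≤ 9 μ^(2δ) * D1  (after rearrangement)
  rw [← mul_div_assoc, div_le_div_iff₀ hD1 hD2]
  have hsplit : (n:ℝ)^(2*(1+δ)) = (n:ℝ)^(2*(1:ℝ)) * (n:ℝ)^(2*δ) := by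
    rw [← Real.rpow_add hn0]
    congr 1
    ring
  calc (n:ℝ)^(2*(1+δ)) * ((n.factorial:ℝ))^2 * ∏ j ∈ Finset.range (n+1), ((1+(j:ℝ))^2+μ^2)
      = ((n:ℝ)^(2*δ) * ∏ j ∈ Finset.range (n+1), ((1+(j:ℝ))^2+μ^2))
        * ((n:ℝ)^(2*(1:ℝ)) * ((n.factorial:ℝ))^2) := by rw [hsplit]; ring
    _ ≤ (9 * μ^(2*δ) * ∏ j ∈ Finset.range (n+1), ((1+δ+(j:ℝ))^2+μ^2))
        * ((n:ℝ)^(2*(1:ℝ)) * ((n.factorial:ℝ))^2) := by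
        refine mul_le_mul_of_nonneg_right ?_ (by positivity)
        exact key
    _ = 9 * μ^(2*δ) * ((n:ℝ)^(2*(1:ℝ)) * ((n.factorial:ℝ))^2)
        * ∏ j ∈ Finset.range (n+1), ((1+δ+(j:ℝ))^2+μ^2) := by ring

lemma Gup (m : ℕ) : ∃ C : ℝ, 0 < C ∧ ∀ δ μ : ℝ, 0 ≤ δ → δ ≤ 1 → 1/2 ≤ μ →
    (‖Complex.Gamma ((((1+δ+(m:ℝ)):ℝ):ℂ) + μ*I)‖)^2
      ≤ C * μ^(2*δ+2*(m:ℝ)+1) * Real.exp (-π*μ) := by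
  induction m with
  | zero =>
    refine ⟨63, by norm_num, fun δ μ hδ0 hδ1 hμ => ?_⟩
    have hμ0 : (0:ℝ) < μ := by linarith
    have h1 : (((1+δ+((0:ℕ):ℝ)):ℝ):ℂ) + μ*I = (((1+δ):ℝ):ℂ) + μ*I := by norm_num
    rw [h1]
    have h2 := interp_bound hδ0 hδ1 hμ
    have h3 := base_Gamma_bound hμ
    have h4 : ((((1:ℝ)):ℂ)) + μ*I = 1 + μ*I := by norm_num
    rw [h4] at h2
    calc (‖Complex.Gamma ((((1+δ):ℝ):ℂ) + μ*I)‖)^2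
        ≤ 9 * μ^(2*δ) * (‖Complex.Gamma (1 + μ*I)‖)^2 := h2
      _ ≤ 9 * μ^(2*δ) * (7 * μ * Real.exp (-π*μ)) := by
          refine mul_le_mul_of_nonneg_left h3 (by positivity)
      _ = 63 * (μ^(2*δ) * μ) * Real.exp (-π*μ) := by ring
      _ = 63 * μ^(2*δ+2*((0:ℕ):ℝ)+1) * Real.exp (-π*μ) := by
          rw [← Real.rpow_add_one (ne_of_gt hμ0) (2*δ)]
          norm_num
  | succ p ih =>
    obtain ⟨C, hC, hCb⟩ := ih
    refine ⟨(4*((p:ℝ)+2)^2+1) * C, by positivity, fun δ μ hδ0 hδ1 hμ => ?_⟩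
    have hμ0 : (0:ℝ) < μ := by linarith
    have hx : (((1+δ+((p+1:ℕ):ℝ)):ℝ):ℂ) + μ*I = ((((1+δ+(p:ℝ))+1):ℝ):ℂ) + μ*I := by
      push_cast; ring_nf
    rw [hx, sq_abs_Gamma_rec (1+δ+(p:ℝ)) (ne_of_gt hμ0)]
    have hb := hCb δ μ hδ0 hδ1 hμ
    have hsq : (1+δ+(p:ℝ))^2 + μ^2 ≤ (4*((p:ℝ)+2)^2+1) * μ^2 := by
      have hp0 : (0:ℝ) ≤ (p:ℝ) := by positivity
      have h1 : (1+δ+(p:ℝ))^2 ≤ ((p:ℝ)+2)^2 := by nlinarith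
      have h2 : ((p:ℝ)+2)^2 ≤ ((p:ℝ)+2)^2 * (4*μ^2) := by
        nlinarith [mul_nonneg (sq_nonneg ((p:ℝ)+2)) (by nlinarith : (0:ℝ) ≤ 4*μ^2 - 1)]
      nlinarith
    calc ((1+δ+(p:ℝ))^2 + μ^2) * (‖Complex.Gamma ((((1+δ+(p:ℝ)):ℝ):ℂ) + μ*I)‖)^2
        ≤ ((4*((p:ℝ)+2)^2+1) * μ^2) * (C * μ^(2*δ+2*(p:ℝ)+1) * Real.exp (-π*μ)) := by
          refine mul_le_mul hsq hb (by positivity) (by positivity)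
      _ = (4*((p:ℝ)+2)^2+1) * C * (μ^2 * μ^(2*δ+2*(p:ℝ)+1)) * Real.exp (-π*μ) := by ring
      _ = (4*((p:ℝ)+2)^2+1) * C * μ^(2*δ+2*((p+1:ℕ):ℝ)+1) * Real.exp (-π*μ) := by
          rw [show (μ:ℝ)^2 = μ^((2:ℝ)) by
              rw [← Real.rpow_natCast μ 2]; norm_num,
            ← Real.rpow_add hμ0]
          push_cast
          ring_nf

lemma Gamma_decay {x : ℝ} (hx : 0 < x) : ∃ C : ℝ, 0 < C ∧ ∀ μ : ℝ, 1/2 ≤ μ →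
    (‖Complex.Gamma ((x:ℂ) + μ*I)‖)^2 ≤ C * μ^(2*x-1) * Real.exp (-π*μ) := by
  rcases le_or_gt 1 x with hx1 | hx1
  · set m : ℕ := ⌊x-1⌋₊ with hm
    set δ : ℝ := x - 1 - m with hδ
    have hm1 : (m:ℝ) ≤ x - 1 := Nat.floor_le (by linarith)
    have hm2 : x - 1 < (m:ℝ) + 1 := Nat.lt_floor_add_one (x-1)
    have hδ0 : 0 ≤ δ := by simp only [hδ]; linarith
    have hδ1 : δ ≤ 1 := by simp only [hδ]; linarith
    obtain ⟨C, hC, hCb⟩ := Gup m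
    refine ⟨C, hC, fun μ hμ => ?_⟩
    have hb := hCb δ μ hδ0 hδ1 hμ
    have he1 : (1:ℝ) + δ + (m:ℝ) = x := by simp only [hδ]; ring
    rw [he1] at hb
    have he2 : 2*δ+2*(m:ℝ)+1 = 2*x-1 := by simp only [hδ]; ring
    rwa [he2] at hb
  · obtain ⟨C, hC, hCb⟩ := Gup 0
    refine ⟨C, hC, fun μ hμ => ?_⟩
    have hμ0 : (0:ℝ) < μ := by linarith
    have hb := hCb x μ hx.le hx1.le hμ
    rw [show (((1+x+((0:ℕ):ℝ)):ℝ):ℂ) = (((x+1):ℝ):ℂ) by push_cast; ring] at hb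
    rw [sq_abs_Gamma_rec x (ne_of_gt hμ0)] at hb
    rw [show 2*x+2*((0:ℕ):ℝ)+1 = 2*x+1 by norm_num] at hb
    have hpow : μ^(2*x+1) = μ^(2*x-1) * μ^2 := by
      rw [← Real.rpow_natCast μ 2, ← Real.rpow_add hμ0]
      norm_num
      congr 1
      ring
    rw [hpow] at hb
    refine (mul_le_mul_iff_of_pos_right (by positivity : (0:ℝ) < μ^2)).mp ?_
    calc (‖Complex.Gamma ((x:ℂ) + μ*I)‖)^2 * μ^2
        ≤ (x^2+μ^2) * (‖Complex.Gamma ((x:ℂ) + μ*I)‖)^2 := by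
          nlinarith [sq_nonneg (‖Complex.Gamma ((x:ℂ) + μ*I)‖), sq_nonneg x,
            sq_nonneg ((‖Complex.Gamma ((x:ℂ) + μ*I)‖)*x)]
      _ ≤ C * (μ^(2*x-1) * μ^2) * Real.exp (-π*μ) := hb
      _ = C * μ^(2*x-1) * Real.exp (-π*μ) * μ^2 := by ring

lemma sq_abs_Gamma_I {l : ℝ} (hl : 0 < l) :
    (‖Complex.Gamma (I*(l:ℂ))‖)^2 = π/(l*Real.sinh (π*l)) := by
  have h := sq_abs_Gamma_rec 0 (ne_of_gt hl)
  rw [show (((0:ℝ)+1:ℝ):ℂ) + (l:ℂ)*I = 1 + l*I by norm_num] at h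
  rw [sq_abs_Gamma_one_add hl] at h
  rw [show ((0:ℝ):ℂ) + (l:ℂ)*I = I*(l:ℂ) by push_cast; ring] at h
  rw [show (0:ℝ)^2 + l^2 = l^2 by ring] at h
  have hs : 0 < Real.sinh (π*l) := by positivity
  field_simp at h ⊢
  nlinarith [h]

lemma jacobiC_sq_abs (α β : ℝ) {l : ℝ} (hl : 0 < l) (hα1 : 0 < α + 1) :
    (‖jacobiC α β (l:ℂ)‖)^2
    = ((2:ℝ)^(α+β+1))^2 * (π/(l*Real.sinh (π*l))) * (Real.Gamma (α+1))^2
      / ((‖Complex.Gamma ((((α+β+1)/2 :ℝ):ℂ) + ((l/2:ℝ):ℂ)*I)‖)^2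
        * (‖Complex.Gamma ((((α-β+1)/2 :ℝ):ℂ) + ((l/2:ℝ):ℂ)*I)‖)^2) := by
  have c1 : ‖(2:ℂ) ^ ((α:ℂ)+(β:ℂ)+1 - I*(l:ℂ))‖ = (2:ℝ)^(α+β+1) := by
    rw [show (2:ℂ) = ((2:ℝ):ℂ) by norm_num,
      Complex.norm_cpow_eq_rpow_re_of_pos (by norm_num : (0:ℝ) < 2)]
    congr 1
    simp
  have c3 : ‖Complex.Gamma ((α:ℂ)+1)‖ = Real.Gamma (α+1) := by
    rw [show (α:ℂ)+1 = ((α+1:ℝ):ℂ) by push_cast; ring, Complex.Gamma_ofReal,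
      Complex.norm_real, Real.norm_eq_abs, abs_of_pos (Real.Gamma_pos_of_pos hα1)]
  have c4 : ((α:ℂ)+(β:ℂ)+1+I*(l:ℂ))/2 = (((α+β+1)/2 :ℝ):ℂ) + ((l/2:ℝ):ℂ)*I := by
    push_cast; ring
  have c5 : ((α:ℂ)+(β:ℂ)+1+I*(l:ℂ))/2 - β = (((α-β+1)/2 :ℝ):ℂ) + ((l/2:ℝ):ℂ)*I := by
    push_cast; ring
  rw [jacobiC, norm_div, norm_mul, norm_mul, norm_mul, div_pow, mul_pow, mul_pow, mul_pow,
    c1, c3, c5, c4, sq_abs_Gamma_I hl]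

lemma inv_helper {p u x y k1 k2 : ℝ} (hp : p ≠ 0) (hu : u ≠ 0) (hx : x ≠ 0) (hy : y ≠ 0)
    (hk1 : k1 ≠ 0) (hk2 : k2 ≠ 0) :
    (k1 * (p/u) * k2 / (x*y))⁻¹ = x*y*u/(p*(k1*k2)) := by
  field_simp

lemma density_bound (α β : ℝ) (hβ : -(1/2:ℝ) < β) (hαβ : β < α) :
    ∃ M : ℝ, 0 < M ∧ ∀ l : ℝ, 0 < l →
      ((‖jacobiC α β (l:ℂ)‖)^2)⁻¹ ≤ M * (1 + l^(2*α+1)) := by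
  have hα : -(1/2:ℝ) < α := lt_trans hβ hαβ
  have hα1 : (0:ℝ) < α+1 := by linarith
  have ha : (0:ℝ) < (α+β+1)/2 := by linarith
  have hb : (0:ℝ) < (α-β+1)/2 := by linarith
  obtain ⟨Ca, hCa, hCab⟩ := Gamma_decay ha
  obtain ⟨Cb, hCb, hCbb⟩ := Gamma_decay hb
  have h2r : (0:ℝ) < (2:ℝ)^(α+β+1) := Real.rpow_pos_of_pos (by norm_num) _
  have hGα : (0:ℝ) < Real.Gamma (α+1) := Real.Gamma_pos_of_pos hα1
  set K := ((2:ℝ)^(α+β+1))^2 * (Real.Gamma (α+1))^2 with hK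
  clear_value K
  have hK0 : (0:ℝ) < K := by rw [hK]; positivity
  have hGa : (0:ℝ) < Real.Gamma ((α+β+1)/2) := Real.Gamma_pos_of_pos ha
  have hGb : (0:ℝ) < Real.Gamma ((α-β+1)/2) := Real.Gamma_pos_of_pos hb
  have h2a : (0:ℝ) < (2:ℝ)^(2*α) := Real.rpow_pos_of_pos (by norm_num) _
  have hπ := Real.pi_pos
  set M1 := Real.Gamma ((α+β+1)/2)^2 * Real.Gamma ((α-β+1)/2)^2 * Real.exp π / (π*K) with hM1
  set M2 := Ca*Cb*(1/((2:ℝ)^(2*α))) * (1/(2*(π*K))) with hM2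
  clear_value M1 M2
  have hM10 : (0:ℝ) < M1 := by rw [hM1]; positivity
  have hM20 : (0:ℝ) < M2 := by rw [hM2]; positivity
  refine ⟨M1+M2, by linarith, fun l hl => ?_⟩
  set s := Real.sinh (π*l) with hs
  clear_value s
  have hs0 : (0:ℝ) < s := by rw [hs]; positivity
  set A2 := (‖Complex.Gamma ((((α+β+1)/2 :ℝ):ℂ) + ((l/2:ℝ):ℂ)*I)‖)^2 with hA2
  set B2 := (‖Complex.Gamma ((((α-β+1)/2 :ℝ):ℂ) + ((l/2:ℝ):ℂ)*I)‖)^2 with hB2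
  clear_value A2 B2
  have hA20 : (0:ℝ) < A2 := by
    have hne : Complex.Gamma ((((α+β+1)/2 :ℝ):ℂ) + ((l/2:ℝ):ℂ)*I) ≠ 0 := by
      apply Complex.Gamma_ne_zero_of_re_pos
      simpa using ha
    rw [hA2]
    exact pow_pos (norm_pos_iff.mpr hne) 2
  have hB20 : (0:ℝ) < B2 := by
    have hne : Complex.Gamma ((((α-β+1)/2 :ℝ):ℂ) + ((l/2:ℝ):ℂ)*I) ≠ 0 := by
      apply Complex.Gamma_ne_zero_of_re_pos
      simpa using hb
    rw [hB2]
    exact pow_pos (norm_pos_iff.mpr hne) 2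
  have hls0 : l*s ≠ 0 := by positivity
  have hw : ((‖jacobiC α β (l:ℂ)‖)^2)⁻¹ = A2*B2*(l*s)/(π*K) := by
    rw [jacobiC_sq_abs α β hl hα1, ← hA2, ← hB2, ← hs, hK]
    exact inv_helper (ne_of_gt hπ) hls0 (ne_of_gt hA20) (ne_of_gt hB20)
      (pow_ne_zero 2 (ne_of_gt h2r)) (pow_ne_zero 2 (ne_of_gt hGα))
  rw [hw]
  have hrp0 : (0:ℝ) ≤ l^(2*α+1) := Real.rpow_nonneg hl.le _
  have hsinh_exp : s ≤ Real.exp (π*l)/2 := by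
    rw [hs, Real.sinh_eq]
    have := Real.exp_pos (-(π*l))
    linarith
  rcases le_or_gt l 1 with hl1 | hl1
  · -- small l
    have hA2b : A2 ≤ Real.Gamma ((α+β+1)/2)^2 := by
      have h := abs_Gamma_le ha (l/2)
      rw [hA2]
      exact pow_le_pow_left₀ (norm_nonneg _) h 2
    have hB2b : B2 ≤ Real.Gamma ((α-β+1)/2)^2 := by
      have h := abs_Gamma_le hb (l/2)
      rw [hB2]
      exact pow_le_pow_left₀ (norm_nonneg _) h 2
    have hls : l*s ≤ Real.exp π := by
      have h2 : Real.exp (π*l) ≤ Real.exp π := by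
        apply Real.exp_le_exp.mpr
        nlinarith [mul_nonneg hπ.le (by linarith : (0:ℝ) ≤ 1 - l)]
      have h3 : l*s ≤ 1*(Real.exp π/2) := by
        apply mul_le_mul hl1 (hsinh_exp.trans (by linarith)) hs0.le (by norm_num)
      have := Real.exp_pos π
      linarith
    calc A2*B2*(l*s)/(π*K)
        ≤ Real.Gamma ((α+β+1)/2)^2 * Real.Gamma ((α-β+1)/2)^2 * Real.exp π / (π*K) := by
          gcongr
      _ = M1 := by rw [hM1]
      _ ≤ (M1+M2) * 1 := by rw [mul_one]; linarith
      _ ≤ (M1+M2) * (1+l^(2*α+1)) := by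
          apply mul_le_mul_of_nonneg_left (by linarith) (by linarith)
  · -- large l
    have hμ : (1/2:ℝ) ≤ l/2 := by linarith
    have hA2b := hCab (l/2) hμ
    have hB2b := hCbb (l/2) hμ
    rw [← hA2] at hA2b
    rw [← hB2] at hB2b
    have hμ0 : (0:ℝ) < l/2 := by linarith
    have hABprod : A2*B2 ≤ Ca*Cb * (l/2)^(2*α) * Real.exp (-(π*l)) := by
      have h1 : A2*B2 ≤ (Ca * (l/2)^(2*((α+β+1)/2)-1) * Real.exp (-π*(l/2)))
          * (Cb * (l/2)^(2*((α-β+1)/2)-1) * Real.exp (-π*(l/2))) := by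
        apply mul_le_mul hA2b hB2b hB20.le (by positivity)
      refine h1.trans (le_of_eq ?_)
      rw [show (Ca * (l/2)^(2*((α+β+1)/2)-1) * Real.exp (-π*(l/2)))
          * (Cb * (l/2)^(2*((α-β+1)/2)-1) * Real.exp (-π*(l/2)))
          = Ca*Cb*((l/2)^(2*((α+β+1)/2)-1) * (l/2)^(2*((α-β+1)/2)-1))
            * (Real.exp (-π*(l/2)) * Real.exp (-π*(l/2))) by ring]
      rw [← Real.rpow_add hμ0, ← Real.exp_add]
      rw [show 2*((α+β+1)/2)-1 + (2*((α-β+1)/2)-1) = 2*α by ring,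
        show -π*(l/2) + -π*(l/2) = -(π*l) by ring]
    have hls : l*s ≤ l * Real.exp (π*l)/2 := by
      have := mul_le_mul_of_nonneg_left hsinh_exp hl.le
      linarith
    have hfinal : A2*B2*(l*s) ≤ Ca*Cb*(l/2)^(2*α) * l / 2 := by
      calc A2*B2*(l*s) ≤ (Ca*Cb * (l/2)^(2*α) * Real.exp (-(π*l))) * (l * Real.exp (π*l)/2) := by
            apply mul_le_mul hABprod hls (by positivity) (by positivity)
        _ = Ca*Cb*(l/2)^(2*α) * l / 2 * (Real.exp (-(π*l)) * Real.exp (π*l)) := by ring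
        _ = Ca*Cb*(l/2)^(2*α) * l / 2 := by
            rw [← Real.exp_add, neg_add_cancel, Real.exp_zero, mul_one]
    have hpow : (l/2)^(2*α) * l = l^(2*α+1) * (1/(2:ℝ)^(2*α)) := by
      rw [Real.div_rpow hl.le (by norm_num : (0:ℝ) ≤ 2), Real.rpow_add_one (ne_of_gt hl)]
      field_simp
    calc A2*B2*(l*s)/(π*K) ≤ (Ca*Cb*(l/2)^(2*α) * l / 2)/(π*K) := by gcongr
      _ = Ca*Cb*((l/2)^(2*α) * l) * (1/(2*(π*K))) := by ring
      _ = Ca*Cb*(l^(2*α+1) * (1/(2:ℝ)^(2*α))) * (1/(2*(π*K))) := by rw [hpow]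
      _ = M2 * l^(2*α+1) := by rw [hM2]; ring
      _ ≤ (M1+M2) * l^(2*α+1) := mul_le_mul_of_nonneg_right (by linarith) hrp0
      _ ≤ (M1+M2)*(1+l^(2*α+1)) := by
          apply mul_le_mul_of_nonneg_left (by linarith) (by linarith)

lemma moment_integral (α t : ℝ) (ht : 0 < t) (hα : -(1/2:ℝ) < α) :
    ∫ l in Ioi (0:ℝ), l^(2*α+1) * Real.exp (-(2*t)*l^2)
      = ((2*t)^(-(α+1))) * ∫ u in Ioi (0:ℝ), u^(2*α+1) * Real.exp (-u^2) := by
  set c : ℝ := Real.sqrt (2*t) with hc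
  have hc0 : 0 < c := Real.sqrt_pos.mpr (by linarith)
  have hcsq : c^2 = 2*t := Real.sq_sqrt (by linarith)
  have key := integral_comp_mul_left_Ioi (fun u => u^(2*α+1) * Real.exp (-u^2)) 0 hc0
  rw [mul_zero] at key
  have heq : ∀ l ∈ Ioi (0:ℝ), (c*l)^(2*α+1) * Real.exp (-(c*l)^2)
      = c^(2*α+1) * (l^(2*α+1) * Real.exp (-(2*t)*l^2)) := by
    intro l hl
    rw [Real.mul_rpow hc0.le (le_of_lt hl)]
    rw [show -(c*l)^2 = -(2*t)*l^2 by rw [mul_pow, hcsq]; ring]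
    ring
  rw [setIntegral_congr_fun measurableSet_Ioi heq, integral_const_mul] at key
  -- key : c^(2α+1) * ∫ target = c⁻¹ • ∫ u ...
  have hcr : c^(2*α+1) ≠ 0 := ne_of_gt (Real.rpow_pos_of_pos hc0 _)
  rw [smul_eq_mul] at key
  have h2 : ((2*t)^(-(α+1))) = (c^(2*α+1))⁻¹ * c⁻¹ := by
    rw [← Real.rpow_neg hc0.le, ← Real.rpow_neg_one c, ← Real.rpow_add hc0, hc,
      Real.sqrt_eq_rpow, ← Real.rpow_mul (by linarith : (0:ℝ) ≤ 2*t)]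
    congr 1
    ring
  have key2 : c^(2*α+1) * (∫ l in Ioi (0:ℝ), l^(2*α+1)*Real.exp (-(2*t)*l^2))
      = c⁻¹ * ∫ u in Ioi (0:ℝ), u^(2*α+1)*Real.exp (-u^2) := by
    simpa using key
  rw [h2, mul_assoc, ← key2, inv_mul_cancel_left₀ hcr]

lemma im_ne_pole {z : ℂ} (hz : z.im ≠ 0) : ∀ m : ℕ, z ≠ -m := by
  intro m h
  apply hz
  rw [h]
  simp

lemma jacobiC_continuousOn (α β : ℝ) (hβ : -(1/2:ℝ) < β) (hαβ : β < α) :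
    ContinuousOn (fun l : ℝ => ((‖jacobiC α β (l:ℂ)‖)^2)⁻¹) (Ioi 0) := by
  have hα : -(1/2:ℝ) < α := lt_trans hβ hαβ
  have hcont0 : Continuous (fun l : ℝ => ((l:ℂ))) := Complex.continuous_ofReal
  have harg1 : Continuous (fun l : ℝ => (α:ℂ)+β+1 - I*(l:ℂ)) := by fun_prop
  have harg2 : Continuous (fun l : ℝ => I*(l:ℂ)) := by fun_prop
  have harg3 : Continuous (fun l : ℝ => ((α:ℂ)+β+1+I*(l:ℂ))/2) := by
    apply Continuous.div_const
    fun_prop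
  have harg4 : Continuous (fun l : ℝ => ((α:ℂ)+β+1+I*(l:ℂ))/2 - β) :=
    harg3.sub continuous_const
  have him2 : ∀ l : ℝ, l ∈ Ioi (0:ℝ) → (I*(l:ℂ)).im ≠ 0 := by
    intro l hl
    simp only [Set.mem_Ioi] at hl
    simp [ne_of_gt hl]
  have him3 : ∀ l : ℝ, l ∈ Ioi (0:ℝ) → ((((α:ℂ)+β+1+I*(l:ℂ)))/2).im ≠ 0 := by
    intro l hl
    simp only [Set.mem_Ioi] at hl
    simp [Complex.div_im]
    positivity
  have him4 : ∀ l : ℝ, l ∈ Ioi (0:ℝ) → ((((α:ℂ)+β+1+I*(l:ℂ)))/2 - (β:ℂ)).im ≠ 0 := by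
    intro l hl
    have := him3 l hl
    simpa using this
  have hg2 : ContinuousOn (fun l : ℝ => Complex.Gamma (I*(l:ℂ))) (Ioi 0) := by
    intro l hl
    exact (ContinuousAt.comp (g := Complex.Gamma) (f := fun l : ℝ => I*(l:ℂ)) (x := l)
      (Complex.differentiableAt_Gamma _ (im_ne_pole (him2 l hl))).continuousAt
      harg2.continuousAt).continuousWithinAt
  have hg3 : ContinuousOn (fun l : ℝ => Complex.Gamma (((α:ℂ)+β+1+I*(l:ℂ))/2)) (Ioi 0) := by
    intro l hl
    exact (ContinuousAt.comp (g := Complex.Gamma)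
      (f := fun l : ℝ => ((α:ℂ)+β+1+I*(l:ℂ))/2) (x := l)
      (Complex.differentiableAt_Gamma _ (im_ne_pole (him3 l hl))).continuousAt
      harg3.continuousAt).continuousWithinAt
  have hg4 : ContinuousOn (fun l : ℝ => Complex.Gamma (((α:ℂ)+β+1+I*(l:ℂ))/2 - β)) (Ioi 0) := by
    intro l hl
    exact (ContinuousAt.comp (g := Complex.Gamma)
      (f := fun l : ℝ => ((α:ℂ)+β+1+I*(l:ℂ))/2 - β) (x := l)
      (Complex.differentiableAt_Gamma _ (im_ne_pole (him4 l hl))).continuousAt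
      harg4.continuousAt).continuousWithinAt
  have hg1 : Continuous (fun l : ℝ => (2:ℂ) ^ ((α:ℂ)+β+1 - I*(l:ℂ))) :=
    harg1.const_cpow (Or.inl (by norm_num))
  have hC : ContinuousOn (fun l : ℝ => jacobiC α β (l:ℂ)) (Ioi 0) := by
    unfold jacobiC
    apply ContinuousOn.div
    · exact ((hg1.continuousOn.mul hg2).mul continuous_const.continuousOn)
    · exact hg3.mul hg4
    · intro l hl
      apply mul_ne_zero
      · exact Complex.Gamma_ne_zero (im_ne_pole (him3 l hl))
      · exact Complex.Gamma_ne_zero (im_ne_pole (him4 l hl))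
  have hCne : ∀ l : ℝ, l ∈ Ioi (0:ℝ) → jacobiC α β (l:ℂ) ≠ 0 := by
    intro l hl
    unfold jacobiC
    apply div_ne_zero
    · apply mul_ne_zero
      apply mul_ne_zero
      · rw [Ne, Complex.cpow_eq_zero_iff]
        push_neg
        intro h
        exact absurd h (by norm_num)
      · exact Complex.Gamma_ne_zero (im_ne_pole (him2 l hl))
      · apply Complex.Gamma_ne_zero_of_re_pos
        simp only [Complex.add_re, Complex.one_re, Complex.ofReal_re]
        linarith
    · apply mul_ne_zero
      · exact Complex.Gamma_ne_zero (im_ne_pole (him3 l hl))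
      · exact Complex.Gamma_ne_zero (im_ne_pole (him4 l hl))
  apply ContinuousOn.inv₀
  · exact (continuous_norm.comp_continuousOn hC).pow 2
  · intro l hl
    exact pow_ne_zero 2 (norm_ne_zero_iff.mpr (hCne l hl))

theorem heatKernel_plancherel_bound (α β : ℝ) (hβ : -(1/2 : ℝ) < β) (hαβ : β < α) :
    ∃ C : ℝ, 0 < C ∧ ∀ t : ℝ, 0 < t →
      (∫ l in Set.Ioi (0 : ℝ),
          Real.exp (-2 * t * (l ^ 2 + (α + β + 1) ^ 2)) *
            (‖jacobiC α β (l : ℂ)‖ ^ 2)⁻¹) ≤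
        C * Real.exp (-2 * t * (α + β + 1) ^ 2) * (1 + t ^ (-(α + 1) : ℝ)) ∧
      MemLp (fun l : ℝ => Real.exp (-t * (l ^ 2 + (α + β + 1) ^ 2))) 2
        (plancherelMeasure α β) := by
  have hα : -(1/2:ℝ) < α := lt_trans hβ hαβ
  obtain ⟨M, hM0, hMb⟩ := density_bound α β hβ hαβ
  set w : ℝ → ℝ := fun l => ((‖jacobiC α β (l : ℂ)‖) ^ 2)⁻¹ with hwdef
  set J := ∫ u in Ioi (0:ℝ), u^(2*α+1)*Real.exp (-u^2) with hJ
  have hJ0 : 0 ≤ J := by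
    rw [hJ]
    refine setIntegral_nonneg measurableSet_Ioi (fun u hu => ?_)
    have : (0:ℝ) < u := hu
    positivity
  have hsqπ : (0:ℝ) < Real.sqrt π := Real.sqrt_pos.mpr Real.pi_pos
  refine ⟨M*(Real.sqrt π + J) + 1, by positivity, fun t ht => ?_⟩
  have h2t : (0:ℝ) < 2*t := by linarith
  have hint1 : IntegrableOn (fun l:ℝ => Real.exp (-(2*t)*l^2)) (Ioi 0) volume :=
    (integrable_exp_neg_mul_sq h2t).integrableOn
  have hint2 : IntegrableOn (fun l:ℝ => l^(2*α+1)*Real.exp (-(2*t)*l^2)) (Ioi 0) volume :=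
    integrableOn_rpow_mul_exp_neg_mul_sq h2t (by linarith : (-1:ℝ) < 2*α+1)
  set E := Real.exp (-2*t*(α+β+1)^2) with hE
  have hE0 : (0:ℝ) < E := Real.exp_pos _
  set g : ℝ → ℝ := fun l => M * E * (Real.exp (-(2*t)*l^2) + l^(2*α+1)*Real.exp (-(2*t)*l^2))
    with hg
  have hg_int : IntegrableOn g (Ioi 0) volume := (hint1.add hint2).const_mul (M*E)
  have hsplit : ∀ l : ℝ, Real.exp (-2*t*(l^2+(α+β+1)^2)) = E * Real.exp (-(2*t)*l^2) := by
    intro l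
    rw [hE, ← Real.exp_add]
    congr 1
    ring
  have hpt : ∀ l ∈ Ioi (0:ℝ), Real.exp (-2*t*(l^2+(α+β+1)^2)) * w l ≤ g l := by
    intro l hl
    have hl0 : (0:ℝ) < l := hl
    have hwle := hMb l hl0
    rw [hsplit l, hg]
    have hexp0 : (0:ℝ) ≤ E * Real.exp (-(2*t)*l^2) := by positivity
    calc E * Real.exp (-(2*t)*l^2) * w l
        ≤ E * Real.exp (-(2*t)*l^2) * (M*(1+l^(2*α+1))) :=
          mul_le_mul_of_nonneg_left hwle hexp0
      _ = M * E * (Real.exp (-(2*t)*l^2) + l^(2*α+1)*Real.exp (-(2*t)*l^2)) := by ring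
  have hP0 : (0:ℝ) ≤ t^(-(α+1) : ℝ) := Real.rpow_nonneg ht.le _
  have hhalf : t^(-(1/2:ℝ)) ≤ 1 + t^(-(α+1) : ℝ) := by
    rcases le_or_gt 1 t with h1 | h1
    · have := Real.rpow_le_one_of_one_le_of_nonpos h1 (by norm_num : -(1/2:ℝ) ≤ 0)
      linarith
    · have := Real.rpow_le_rpow_of_exponent_ge ht h1.le
        (by linarith : (-(α+1):ℝ) ≤ -(1/2:ℝ))
      linarith
  have b1 : ∫ l in Ioi (0:ℝ), Real.exp (-(2*t)*l^2) ≤ Real.sqrt π * (1+t^(-(α+1):ℝ)) := by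
    rw [integral_gaussian_Ioi (2*t)]
    have e1 : Real.sqrt (π/(2*t)) ≤ Real.sqrt π * t^(-(1/2:ℝ)) := by
      rw [Real.sqrt_div Real.pi_pos.le]
      have h2 : (0:ℝ) < Real.sqrt t := Real.sqrt_pos.mpr ht
      have h4 : Real.sqrt π / Real.sqrt t = Real.sqrt π * t^(-(1/2:ℝ)) := by
        rw [Real.rpow_neg ht.le, ← Real.sqrt_eq_rpow, div_eq_mul_inv]
      calc Real.sqrt π / Real.sqrt (2*t) ≤ Real.sqrt π / Real.sqrt t :=
            div_le_div_of_nonneg_left hsqπ.le h2 (Real.sqrt_le_sqrt (by linarith))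
        _ = _ := h4
    have e2 : Real.sqrt π * t^(-(1/2:ℝ)) ≤ Real.sqrt π * (1+t^(-(α+1):ℝ)) :=
      mul_le_mul_of_nonneg_left hhalf hsqπ.le
    nlinarith [Real.sqrt_nonneg (π/(2*t))]
  have b2 : ∫ l in Ioi (0:ℝ), l^(2*α+1)*Real.exp (-(2*t)*l^2) ≤ J * (1+t^(-(α+1):ℝ)) := by
    rw [show (∫ l in Ioi (0:ℝ), l^(2*α+1)*Real.exp (-(2*t)*l^2))
        = ((2*t)^(-(α+1):ℝ)) * J from moment_integral α t ht hα]
    have e1 : ((2*t)^(-(α+1):ℝ)) ≤ t^(-(α+1):ℝ) := by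
      rw [Real.mul_rpow (by norm_num : (0:ℝ) ≤ 2) ht.le]
      have h2 : (2:ℝ)^(-(α+1):ℝ) ≤ 1 :=
        Real.rpow_le_one_of_one_le_of_nonpos (by norm_num) (by linarith)
      nlinarith
    have e2 : ((2*t)^(-(α+1):ℝ)) * J ≤ t^(-(α+1):ℝ) * J := mul_le_mul_of_nonneg_right e1 hJ0
    have e3 : t^(-(α+1):ℝ) * J ≤ (1+t^(-(α+1):ℝ)) * J := by
      apply mul_le_mul_of_nonneg_right (by linarith) hJ0
    linarith
  constructor
  · -- integral bound
    have hfnn : 0 ≤ᵐ[volume.restrict (Ioi (0:ℝ))]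
        fun l => Real.exp (-2*t*(l^2+(α+β+1)^2)) * w l := by
      refine Filter.Eventually.of_forall (fun l => ?_)
      have : 0 ≤ w l := by rw [hwdef]; positivity
      positivity
    have hle : (fun l => Real.exp (-2*t*(l^2+(α+β+1)^2)) * w l)
        ≤ᵐ[volume.restrict (Ioi (0:ℝ))] g :=
      (ae_restrict_iff' measurableSet_Ioi).mpr (Filter.Eventually.of_forall hpt)
    calc ∫ l in Ioi (0:ℝ), Real.exp (-2*t*(l^2+(α+β+1)^2)) * w l
        ≤ ∫ l in Ioi (0:ℝ), g l := integral_mono_of_nonneg hfnn hg_int hle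
      _ = M*E*((∫ l in Ioi (0:ℝ), Real.exp (-(2*t)*l^2))
            + ∫ l in Ioi (0:ℝ), l^(2*α+1)*Real.exp (-(2*t)*l^2)) := by
          rw [hg, integral_const_mul, integral_add hint1 hint2]
      _ ≤ M*E*(Real.sqrt π * (1+t^(-(α+1):ℝ)) + J * (1+t^(-(α+1):ℝ))) := by
          apply mul_le_mul_of_nonneg_left (by linarith) (by positivity)
      _ = M*(Real.sqrt π + J) * E * (1+t^(-(α+1):ℝ)) := by ring
      _ ≤ (M*(Real.sqrt π + J) + 1) * E * (1+t^(-(α+1):ℝ)) := by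
          have h1 : (0:ℝ) < E * (1+t^(-(α+1):ℝ)) := by positivity
          nlinarith
  · -- Memℒp
    have hcont : Continuous (fun l:ℝ => Real.exp (-t*(l^2+(α+β+1)^2))) := by
      apply Real.continuous_exp.comp
      continuity
    refine (memLp_two_iff_integrable_sq hcont.aestronglyMeasurable).mpr ?_
    rw [plancherelMeasure]
    have hwae : AEMeasurable w (volume.restrict (Ioi (0:ℝ))) :=
      (jacobiC_continuousOn α β hβ hαβ).aemeasurable measurableSet_Ioi
    have hf : AEMeasurable (fun l => Real.toNNReal (w l)) (volume.restrict (Ioi (0:ℝ))) :=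
      measurable_real_toNNReal.comp_aemeasurable hwae
    have hdens : (fun l : ℝ => ENNReal.ofReal (((‖jacobiC α β (l : ℂ)‖) ^ 2)⁻¹))
        = fun l => ((Real.toNNReal (w l) : ℝ≥0) : ℝ≥0∞) := rfl
    rw [hdens]
    refine (integrable_withDensity_iff_integrable_coe_smul₀ hf).mpr ?_
    have hq : Continuous (fun l:ℝ => (Real.exp (-t*(l^2+(α+β+1)^2)))^2) := hcont.pow 2
    have hsm : AEStronglyMeasurable
        (fun l : ℝ => ((Real.toNNReal (w l) : ℝ)) • (Real.exp (-t*(l^2+(α+β+1)^2)))^2)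
        (volume.restrict (Ioi (0:ℝ))) := by
      apply AEMeasurable.aestronglyMeasurable
      exact ((measurable_coe_nnreal_real.comp_aemeasurable hf).mul hq.aemeasurable).congr
        (Filter.Eventually.of_forall (fun l => by simp [smul_eq_mul]))
    refine Integrable.mono' hg_int hsm ?_
    refine (ae_restrict_iff' measurableSet_Ioi).mpr (Filter.Eventually.of_forall (fun l hl => ?_))
    have hl0 : (0:ℝ) < l := hl
    have hw0 : 0 ≤ w l := by rw [hwdef]; positivity
    have hcoe : ((Real.toNNReal (w l) : ℝ)) = w l := Real.coe_toNNReal _ hw0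
    have hsq : (Real.exp (-t*(l^2+(α+β+1)^2)))^2 = Real.exp (-2*t*(l^2+(α+β+1)^2)) := by
      rw [pow_two, ← Real.exp_add]
      congr 1
      ring
    rw [smul_eq_mul, hcoe, hsq, Real.norm_eq_abs, _root_.abs_of_nonneg (by positivity)]
    rw [mul_comm]
    exact hpt l hl
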